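/- Let X be a Banach space, T ∈ B(X) power-bounded with σ(T) ∩ 𝕋 ⊆ {1}, and let S be the restriction of T to the closure Z of Ran(I - T). If Ran(I - T) is closed, then the spectral radius of S is strictly less than 1, and consequently there exist C > 0 and r ∈ [0,1) with ‖Tⁿ - P_T‖ ≤ C rⁿ for all n ≥ 0, where P_T is the projection onto Fix T along Z (assuming X = Fix T ⊕ Z). -/

import Mathlib

open scoped ENNReal NNReal



/-- Auxiliary lemma: a power-bounded operator on a complex Banach space whose spectrum
avoids the unit circle has spectral radius `< 1` and geometrically decaying powers. -/
lemma stmt2_aux {E : Type*} [NormedAddCommGroup E] [NormedSpace ℂ E] [CompleteSpace E]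
    (S : E →L[ℂ] E) (M' : ℝ) (hM'1 : (1:ℝ) ≤ M') (hSn : ∀ n : ℕ, ‖S ^ n‖ ≤ M')
    (hcirc : ∀ μ : ℂ, ‖μ‖ = 1 → μ ∉ spectrum ℂ S) :
    spectralRadius ℂ S < 1 ∧
      ∃ C : ℝ, 1 ≤ C ∧ ∃ ρ : ℝ, 0 < ρ ∧ ρ < 1 ∧ ∀ n : ℕ, ‖S ^ n‖ ≤ C * ρ ^ n := by
  have hM'0 : (0:ℝ) ≤ M' := zero_le_one.trans hM'1
  have hle1 : ∀ μ ∈ spectrum ℂ S, ‖μ‖ ≤ 1 := by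
    intro μ hμ
    by_contra hcon
    push_neg at hcon
    obtain ⟨n, hn⟩ := pow_unbounded_of_one_lt M' hcon
    have hmem : μ ^ n ∈ spectrum ℂ (S ^ n) :=
      spectrum.pow_image_subset (𝕜 := ℂ) S n ⟨μ, hμ, rfl⟩
    have h1 : ‖μ ^ n‖ ≤ ‖S ^ n‖ * ‖(1 : E →L[ℂ] E)‖ :=
      spectrum.norm_le_norm_mul_of_mem hmem
    have h2 : ‖(1 : E →L[ℂ] E)‖ ≤ 1 := ContinuousLinearMap.norm_id_le
    have h3 : ‖μ‖ ^ n ≤ M' := by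
      rw [← norm_pow]
      calc ‖μ ^ n‖ ≤ ‖S ^ n‖ * ‖(1 : E →L[ℂ] E)‖ := h1
        _ ≤ M' * 1 := mul_le_mul (hSn n) h2 (ContinuousLinearMap.opNorm_nonneg _) hM'0
        _ = M' := mul_one _
    exact absurd h3 (not_le.mpr hn)
  have hrad : spectralRadius ℂ S < 1 := by
    rcases (spectrum ℂ S).eq_empty_or_nonempty with he | hne
    · rw [spectralRadius]
      simp [he]
    · have h := spectrum.spectralRadius_lt_of_forall_lt_of_nonempty hne (r := 1) ?_
      · simpa using h
      · intro μ hμ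
        have h1 := hle1 μ hμ
        have h2 : ‖μ‖ ≠ 1 := fun h => hcirc μ h hμ
        have : ‖μ‖ < 1 := lt_of_le_of_ne h1 h2
        exact_mod_cast this
  refine ⟨hrad, ?_⟩
  obtain ⟨r, hr0, hr1⟩ := ENNReal.lt_iff_exists_nnreal_btwn.mp hrad
  have hrlt1 : (r : ℝ) < 1 := by exact_mod_cast hr1
  set ρ : ℝ := max (r : ℝ) (1/2) with hρdef
  have hρpos : (0:ℝ) < ρ := lt_of_lt_of_le (by norm_num) (le_max_right _ _)
  have hρ1 : ρ < 1 := max_lt hrlt1 (by norm_num)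
  have hgel := spectrum.pow_nnnorm_pow_one_div_tendsto_nhds_spectralRadius S
  have hev : ∀ᶠ n : ℕ in Filter.atTop, (‖S ^ n‖₊ : ℝ≥0∞) ^ (1 / (n:ℝ)) < (r : ℝ≥0∞) :=
    Filter.Tendsto.eventually_lt_const hr0 hgel
  obtain ⟨N, hN⟩ := Filter.eventually_atTop.mp hev
  have hbig : ∀ n : ℕ, N ≤ n → 1 ≤ n → ‖S ^ n‖ ≤ ρ ^ n := by
    intro n h1 h2
    have h3 := hN n h1
    have hn0 : (n:ℝ) ≠ 0 := Nat.cast_ne_zero.mpr (by omega)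
    have h4 : (((‖S ^ n‖₊ : ℝ≥0∞) ^ (1/(n:ℝ))) ^ (n:ℝ)) < ((r : ℝ≥0∞)) ^ (n:ℝ) :=
      ENNReal.rpow_lt_rpow h3 (by positivity)
    rw [← ENNReal.rpow_mul, one_div, inv_mul_cancel₀ hn0, ENNReal.rpow_one] at h4
    rw [ENNReal.rpow_natCast, ← ENNReal.coe_pow] at h4
    have h6 : ‖S ^ n‖₊ < r ^ n := by exact_mod_cast h4
    have h7 : ‖S ^ n‖ ≤ (r : ℝ) ^ n := by
      have := h6.le
      exact_mod_cast this
    calc ‖S ^ n‖ ≤ (r : ℝ) ^ n := h7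
      _ ≤ ρ ^ n := pow_le_pow_left₀ r.coe_nonneg (le_max_left _ _) n
  refine ⟨max (M' / ρ ^ (N+1)) 1, le_max_right _ _, ρ, hρpos, hρ1, ?_⟩
  set C₀ : ℝ := max (M' / ρ ^ (N+1)) 1 with hC₀def
  have hC₀1 : (1:ℝ) ≤ C₀ := le_max_right _ _
  intro n
  rcases le_or_gt (N+1) n with h | h
  · calc ‖S ^ n‖ ≤ ρ ^ n := hbig n (by omega) (by omega)
      _ ≤ C₀ * ρ ^ n := le_mul_of_one_le_left (pow_nonneg hρpos.le n) hC₀1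
  · have hρn : ρ ^ (N+1) ≤ ρ ^ n := pow_le_pow_of_le_one hρpos.le hρ1.le (by omega)
    calc ‖S ^ n‖ ≤ M' := hSn n
      _ = (M' / ρ ^ (N+1)) * ρ ^ (N+1) := by
          field_simp
      _ ≤ (M' / ρ ^ (N+1)) * ρ ^ n :=
          mul_le_mul_of_nonneg_left hρn (div_nonneg hM'0 (pow_nonneg hρpos.le _))
      _ ≤ C₀ * ρ ^ n :=
          mul_le_mul_of_nonneg_right (le_max_left _ _) (pow_nonneg hρpos.le n)

set_option maxHeartbeats 1000000 in
/-- If `T` is power-bounded with peripheral spectrum in `{1}`, `X = Fix T ⊕ Z` with `Z` the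
closure of `Ran(I - T)`, `S` is the restriction of `T` to `Z`, and `Ran(I - T)` is closed,
then `r(S) < 1` and `‖Tⁿ - P_T‖ ≤ C rⁿ` for some `C > 0`, `r ∈ [0,1)`. -/
theorem stmt2 {X : Type*} [NormedAddCommGroup X] [NormedSpace ℂ X] [CompleteSpace X]
    (T : X →L[ℂ] X)
    (hpb : ∃ M : ℝ, ∀ n : ℕ, ‖T ^ n‖ ≤ M)
    (hσ : spectrum ℂ T ∩ {z : ℂ | ‖z‖ = 1} ⊆ {1})
    (Z : Submodule ℂ X) (hZ : Z = (LinearMap.range ((1 - T : X →L[ℂ] X) : X →ₗ[ℂ] X)).topologicalClosure)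
    -- `S` is the restriction of `T` to the invariant subspace `Z`
    (S : Z →L[ℂ] Z) (hS : ∀ z : Z, (S z : X) = T z)
    -- the direct sum decomposition `X = Fix T ⊕ Z` with projection `P` onto `Fix T` along `Z`
    (hcompl : IsCompl (LinearMap.ker ((1 - T : X →L[ℂ] X) : X →ₗ[ℂ] X)) Z)
    (P : X →L[ℂ] X)
    (hP1 : ∀ x ∈ LinearMap.ker ((1 - T : X →L[ℂ] X) : X →ₗ[ℂ] X), P x = x)
    (hP2 : ∀ x ∈ Z, P x = 0)
    -- assumption: `Ran(I - T)` is closed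
    (hclosed : IsClosed ((LinearMap.range ((1 - T : X →L[ℂ] X) : X →ₗ[ℂ] X) : Submodule ℂ X) : Set X)) :
    spectralRadius ℂ S < 1 ∧
    ∃ C > (0:ℝ), ∃ r ∈ Set.Ico (0:ℝ) 1, ∀ n : ℕ, ‖T ^ n - P‖ ≤ C * r ^ n := by
  classical
  open ContinuousLinearMap in
  obtain ⟨M, hM⟩ := hpb
  set M' : ℝ := max M 1 with hM'def
  have hM'1 : (1:ℝ) ≤ M' := le_max_right _ _
  have hM'0 : (0:ℝ) ≤ M' := zero_le_one.trans hM'1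
  have hMn : ∀ n : ℕ, ‖T ^ n‖ ≤ M' := fun n => (hM n).trans (le_max_left _ _)
  have hZc : IsClosed (Z : Set X) := hZ ▸ (LinearMap.range ((1 - T : X →L[ℂ] X) : X →ₗ[ℂ] X)).isClosed_topologicalClosure
  haveI : CompleteSpace Z := hZc.completeSpace_coe
  have hZr : Z = LinearMap.range ((1 - T : X →L[ℂ] X) : X →ₗ[ℂ] X) := by
    rw [hZ, hclosed.submodule_topologicalClosure_eq]
  have hker : ∀ x : X, x ∈ LinearMap.ker ((1 - T : X →L[ℂ] X) : X →ₗ[ℂ] X) ↔ T x = x := by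
    intro x
    rw [LinearMap.mem_ker]
    constructor
    · intro h
      have h1 : x - T x = 0 := by
        simpa [ContinuousLinearMap.sub_apply] using h
      exact (sub_eq_zero.mp h1).symm
    · intro h
      have h2 : ((1 : X →L[ℂ] X) - T) x = x - T x := by
        simp [ContinuousLinearMap.sub_apply]
      rw [ContinuousLinearMap.coe_coe, h2, h, sub_self]
  have hTZ : ∀ x ∈ Z, T x ∈ Z := by
    intro x hx
    have h1 : (1 - T) x ∈ Z := by
      rw [hZr]; exact LinearMap.mem_range.mpr ⟨x, rfl⟩
    have h2 : T x = x - (1 - T) x := by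
      simp [ContinuousLinearMap.sub_apply]
    rw [h2]; exact Z.sub_mem hx h1
  have hpow : ∀ (n : ℕ) (z : Z), (((S ^ n) z : Z) : X) = (T ^ n) (z : X) := by
    intro n
    induction n with
    | zero => intro z; simp
    | succ n ih =>
      intro z
      rw [pow_succ, pow_succ, ContinuousLinearMap.mul_apply,
        ContinuousLinearMap.mul_apply, ← hS, ih (S z)]
  have hSn : ∀ n : ℕ, ‖S ^ n‖ ≤ M' := by
    intro n
    refine ContinuousLinearMap.opNorm_le_bound _ hM'0 fun z => ?_
    have h1 : ‖(S ^ n) z‖ = ‖(T ^ n) (z : X)‖ := by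
      rw [show ‖(S ^ n) z‖ = ‖(((S ^ n) z : Z) : X)‖ from rfl, hpow]
    rw [h1]
    calc ‖(T ^ n) (z : X)‖ ≤ ‖T ^ n‖ * ‖(z : X)‖ := ContinuousLinearMap.le_opNorm _ _
      _ ≤ M' * ‖z‖ := mul_le_mul_of_nonneg_right (hMn n) (norm_nonneg _)
  have hdisj : ∀ x : X, x ∈ LinearMap.ker ((1 - T : X →L[ℂ] X) : X →ₗ[ℂ] X) → x ∈ Z → x = 0 :=
    fun x h1 h2 => (Submodule.disjoint_def.mp hcompl.disjoint) x h1 h2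
  have hdecomp : ∀ x : X, ∃ f ∈ LinearMap.ker ((1 - T : X →L[ℂ] X) : X →ₗ[ℂ] X), ∃ z ∈ Z, f + z = x :=
    fun x => by
      obtain ⟨f, z, hf, hz, h⟩ := Submodule.codisjoint_iff_exists_add_eq.mp hcompl.codisjoint x
      exact ⟨f, hf, z, hz, h⟩
  -- unit circle avoids the spectrum of S
  have hcirc : ∀ μ : ℂ, ‖μ‖ = 1 → μ ∉ spectrum ℂ S := by
    intro μ hμ1
    rw [spectrum.notMem_iff, ContinuousLinearMap.isUnit_iff_bijective]
    have happ : ∀ z : Z, ((algebraMap ℂ (Z →L[ℂ] Z) μ - S) z : X) = μ • (z : X) - T z := by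
      intro z
      simp [Algebra.algebraMap_eq_smul_one, ContinuousLinearMap.sub_apply, hS]
    by_cases hμ : μ = 1
    · subst hμ
      constructor
      · intro a b hab
        have h0 : (algebraMap ℂ (Z →L[ℂ] Z) 1 - S) (a - b) = 0 := by
          rw [map_sub, hab, sub_self]
        have h1 : ((1:ℂ) • ((a - b : Z) : X)) - T ((a - b : Z) : X) = 0 := by
          rw [← happ, h0]; rfl
        have h2 : ((a - b : Z) : X) ∈ LinearMap.ker ((1 - T : X →L[ℂ] X) : X →ₗ[ℂ] X) := by
          rw [hker]
          rw [one_smul] at h1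
          exact (sub_eq_zero.mp h1).symm
        have h3 : ((a - b : Z) : X) = 0 := hdisj _ h2 (a - b).2
        have : a - b = 0 := Subtype.ext h3
        exact sub_eq_zero.mp this
      · intro z
        have hzr : (z : X) ∈ LinearMap.range ((1 - T : X →L[ℂ] X) : X →ₗ[ℂ] X) := hZr ▸ z.2
        obtain ⟨x, hx⟩ := LinearMap.mem_range.mp hzr
        obtain ⟨f, hf, w, hw, hfw⟩ := hdecomp x
        have hTf : T f = f := (hker f).mp hf
        have hval : (1 - T) x = w - T w := by
          rw [← hfw, map_add]
          have h1 : (1 - T) f = 0 := LinearMap.mem_ker.mp hf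
          rw [h1, zero_add]
          simp [ContinuousLinearMap.sub_apply]
        refine ⟨⟨w, hw⟩, ?_⟩
        apply Subtype.ext
        rw [happ ⟨w, hw⟩]
        rw [one_smul]
        show w - T w = (z : X)
        rw [← hval]; exact hx
    · -- μ ≠ 1 : μ is not in the spectrum of T
      have hμT : μ ∉ spectrum ℂ T := fun hmem => hμ (hσ ⟨hmem, hμ1⟩)
      have hTbij := ContinuousLinearMap.isUnit_iff_bijective.mp (spectrum.notMem_iff.mp hμT)
      have happT : ∀ x : X, (algebraMap ℂ (X →L[ℂ] X) μ - T) x = μ • x - T x := by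
        intro x
        simp [Algebra.algebraMap_eq_smul_one, ContinuousLinearMap.sub_apply]
      constructor
      · intro a b hab
        have h0 : (algebraMap ℂ (Z →L[ℂ] Z) μ - S) (a - b) = 0 := by
          rw [map_sub, hab, sub_self]
        have h1 : (algebraMap ℂ (X →L[ℂ] X) μ - T) ((a - b : Z) : X) = 0 := by
          rw [happT, ← happ, h0]; rfl
        have h2 : (algebraMap ℂ (X →L[ℂ] X) μ - T) ((a - b : Z) : X)
            = (algebraMap ℂ (X →L[ℂ] X) μ - T) 0 := by rw [h1, map_zero]
        have h3 : ((a - b : Z) : X) = 0 := hTbij.1 h2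
        exact sub_eq_zero.mp (Subtype.ext h3)
      · intro z
        obtain ⟨x, hx⟩ := hTbij.2 (z : X)
        obtain ⟨f, hf, w, hw, hfw⟩ := hdecomp x
        have hTf : T f = f := (hker f).mp hf
        have hval : (algebraMap ℂ (X →L[ℂ] X) μ - T) x = (μ - 1) • f + (μ • w - T w) := by
          rw [← hfw, map_add, happT, happT, hTf]
          rw [sub_smul, one_smul]
        have hfker : (μ - 1) • f ∈ LinearMap.ker ((1 - T : X →L[ℂ] X) : X →ₗ[ℂ] X) :=
          Submodule.smul_mem _ _ hf
        have hwZ : μ • w - T w ∈ Z := Z.sub_mem (Z.smul_mem _ hw) (hTZ w hw)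
        have hfZ : (μ - 1) • f ∈ Z := by
          have : (μ - 1) • f = (z : X) - (μ • w - T w) := by
            rw [← hx, hval]; abel
          rw [this]
          exact Z.sub_mem z.2 hwZ
        have hf0 : (μ - 1) • f = 0 := hdisj _ hfker hfZ
        have hf0' : f = 0 := by
          rcases smul_eq_zero.mp hf0 with h | h
          · exact absurd (by linear_combination h : μ = 1) hμ
          · exact h
        have hxw : x = w := by rw [← hfw, hf0', zero_add]
        refine ⟨⟨w, hw⟩, ?_⟩
        apply Subtype.ext
        rw [happ ⟨w, hw⟩]
        show μ • w - T w = (z : X)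
        rw [← hx, hxw, happT]
  obtain ⟨hrad, C₀, hC₀1, ρ, hρpos, hρ1, hSpow⟩ := stmt2_aux S M' hM'1 hSn hcirc
  refine ⟨hrad, ?_⟩
  refine ⟨C₀ * (‖(1 : X →L[ℂ] X) - P‖ + 1), by positivity, ρ, ⟨hρpos.le, hρ1⟩, ?_⟩
  intro n
  refine ContinuousLinearMap.opNorm_le_bound _ (by positivity) fun x => ?_
  obtain ⟨f, hf, z, hz, hx⟩ := hdecomp x
  have hTf1 : T f = f := (hker f).mp hf
  have hTf : (T ^ n) f = f := by
    induction n with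
    | zero => simp
    | succ m ih => rw [pow_succ, ContinuousLinearMap.mul_apply, hTf1, ih]
  have hPx : P x = f := by rw [← hx, map_add, hP1 f hf, hP2 z hz, add_zero]
  have h1 : (T ^ n - P) x = (T ^ n) z := by
    rw [ContinuousLinearMap.sub_apply, hPx, ← hx, map_add, hTf, add_sub_cancel_left]
  have h2 : ‖(T ^ n) z‖ ≤ C₀ * ρ ^ n * ‖z‖ := by
    have hle := (S ^ n).le_opNorm ⟨z, hz⟩
    have heq : ‖(S ^ n) ⟨z, hz⟩‖ = ‖(T ^ n) z‖ := by
      rw [show ‖(S ^ n) (⟨z, hz⟩ : Z)‖ = ‖(((S ^ n) (⟨z, hz⟩ : Z) : Z) : X)‖ from rfl,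
        hpow n ⟨z, hz⟩]
    have hzn : ‖(⟨z, hz⟩ : Z)‖ = ‖z‖ := rfl
    rw [heq, hzn] at hle
    calc ‖(T ^ n) z‖ ≤ ‖S ^ n‖ * ‖z‖ := hle
      _ ≤ C₀ * ρ ^ n * ‖z‖ := mul_le_mul_of_nonneg_right (hSpow n) (norm_nonneg _)
  have h3 : ‖z‖ ≤ ‖(1 : X →L[ℂ] X) - P‖ * ‖x‖ := by
    have hzeq : z = ((1 : X →L[ℂ] X) - P) x := by
      rw [ContinuousLinearMap.sub_apply, ContinuousLinearMap.one_apply, hPx, ← hx,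
        add_sub_cancel_left]
    rw [hzeq]
    exact ContinuousLinearMap.le_opNorm _ _
  calc ‖(T ^ n - P) x‖ = ‖(T ^ n) z‖ := by rw [h1]
    _ ≤ C₀ * ρ ^ n * ‖z‖ := h2
    _ ≤ C₀ * ρ ^ n * (‖(1 : X →L[ℂ] X) - P‖ * ‖x‖) :=
        mul_le_mul_of_nonneg_left h3 (by positivity)
    _ = (C₀ * ‖(1 : X →L[ℂ] X) - P‖) * ρ ^ n * ‖x‖ := by ring
    _ ≤ (C₀ * (‖(1 : X →L[ℂ] X) - P‖ + 1)) * ρ ^ n * ‖x‖ := by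
        gcongr
        linarith
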